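/- Let l ≥ 1 and let C : ℝ^l → ℂ be of the form C(θ) = ∑_{k=1}^{L} β_k · exp(i·⟨γ_k, θ⟩), where each β_k ∈ ℂ and each frequency vector γ_k lies in {−2,−1,0,1,2}^l. Then for every coordinate j ∈ {1,…,l} and every θ ∈ ℝ^l, the partial derivative satisfies ∂C/∂θ_j (θ) = [C(θ + (π/4)e_j) − C(θ − (π/4)e_j)] − ((√2 − 1)/2)·[C(θ + (π/2)e_j) − C(θ − (π/2)e_j)], where e_j is the j-th standard unit vector of ℝ^l. -/

import Mathlib

open Complex Real

lemma psr_coef_key (a : ℝ) (ha : a ∈ ({-2, -1, 0, 1, 2} : Set ℝ)) :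
    Complex.I * a =
      (Complex.exp (Complex.I * ((a * (π/4) : ℝ) : ℂ)) -
          Complex.exp (Complex.I * ((-(a * (π/4)) : ℝ) : ℂ)))
        - ((Real.sqrt 2 - 1) / 2 : ℝ) *
          (Complex.exp (Complex.I * ((a * (π/2) : ℝ) : ℂ)) -
            Complex.exp (Complex.I * ((-(a * (π/2)) : ℝ) : ℂ))) := by
  have key : ∀ x : ℝ, Complex.exp (Complex.I * (x : ℂ)) =
      (Real.cos x : ℂ) + (Real.sin x : ℂ) * Complex.I := by
    intro x
    rw [mul_comm, Complex.exp_mul_I, ← Complex.ofReal_cos, ← Complex.ofReal_sin]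
  rcases ha with h | h | h | h | h <;> subst h <;>
    simp only [key] <;>
    norm_num [Real.cos_pi_div_four, Real.sin_pi_div_four, Real.cos_pi_div_two,
      Real.sin_pi_div_two, Real.cos_pi, Real.sin_pi, Real.cos_neg, Real.sin_neg,
      (by ring : -2 * (π/4) = -(π/2)), (by ring : -2 * (π/2) = -π),
      (by ring : (2:ℝ) * (π/4) = π/2), (by ring : (2:ℝ) * (π/2) = π),
      (by ring : (-1:ℝ) * (π/4) = -(π/4)), (by ring : (-1:ℝ) * (π/2) = -(π/2))] <;>
    ring_nf

lemma psr_sum_add (l : ℕ) (g θ : Fin l → ℝ) (j : Fin l) (s : ℝ) :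
    (∑ j', g j' * (θ + (Pi.single j s : Fin l → ℝ)) j') = (∑ j', g j' * θ j') + g j * s := by
  simp only [Pi.add_apply, mul_add, Finset.sum_add_distrib]
  congr 1
  simp [Pi.single_apply, mul_ite, Finset.sum_ite_eq']

lemma psr_sum_sub (l : ℕ) (g θ : Fin l → ℝ) (j : Fin l) (s : ℝ) :
    (∑ j', g j' * (θ - (Pi.single j s : Fin l → ℝ)) j') = (∑ j', g j' * θ j') - g j * s := by
  have h : θ - (Pi.single j s : Fin l → ℝ) = θ + (Pi.single j (-s) : Fin l → ℝ) := by
    funext i; simp [Pi.single_apply]; split <;> ring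
  rw [h, psr_sum_add]; ring

lemma psr_sum_update (l : ℕ) (g θ : Fin l → ℝ) (j : Fin l) (t : ℝ) :
    (∑ j', g j' * Function.update θ j t j') = (∑ j', g j' * θ j') + g j * (t - θ j) := by
  have h : Function.update θ j t = θ + (Pi.single j (t - θ j) : Fin l → ℝ) := by
    funext i
    rcases eq_or_ne i j with rfl | h <;> simp [Function.update_apply, Pi.single_apply, *]
  rw [h, psr_sum_add]

/-- **Multivariate parameter shift rule**: if `C(θ) = ∑_{k=1}^{L} β_k exp(i⟨γ_k, θ⟩)` with
frequency vectors `γ_k ∈ {-2,-1,0,1,2}^l`, then each partial derivative of `C` is given by the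
four-term parameter shift rule. -/
theorem multivariate_parameter_shift_rule
    (l L : ℕ) (hl : 1 ≤ l)
    (β : Fin L → ℂ) (γ : Fin L → Fin l → ℝ)
    (hγ : ∀ k j, γ k j ∈ ({-2, -1, 0, 1, 2} : Set ℝ))
    (C : (Fin l → ℝ) → ℂ)
    (hC : ∀ θ : Fin l → ℝ, C θ = ∑ k, β k * Complex.exp (Complex.I * ((∑ j, γ k j * θ j : ℝ) : ℂ)))
    (j : Fin l) (θ : Fin l → ℝ) :
    deriv (fun t : ℝ => C (Function.update θ j t)) (θ j) =
      (C (θ + Pi.single j (π / 4)) - C (θ - Pi.single j (π / 4)))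
        - ((Real.sqrt 2 - 1) / 2 : ℝ) *
            (C (θ + Pi.single j (π / 2)) - C (θ - Pi.single j (π / 2))) := by
  set S : Fin L → ℝ := fun k => ∑ j', γ k j' * θ j' with hS
  -- the function of t
  have hfun : (fun t : ℝ => C (Function.update θ j t)) =
      fun t : ℝ => ∑ k, β k * Complex.exp (Complex.I * ((S k + γ k j * (t - θ j) : ℝ) : ℂ)) := by
    funext t
    rw [hC]
    refine Finset.sum_congr rfl fun k _ => ?_
    rw [psr_sum_update]
  -- derivative
  have hderiv : HasDerivAt (fun t : ℝ => C (Function.update θ j t))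
      (∑ k, β k * Complex.exp (Complex.I * ((S k : ℝ) : ℂ)) * (Complex.I * (γ k j))) (θ j) := by
    rw [hfun]
    apply HasDerivAt.fun_sum
    intro k _
    have h1 : HasDerivAt (fun t : ℝ => ((S k + γ k j * (t - θ j) : ℝ) : ℂ)) ((γ k j : ℂ)) (θ j) := by
      have : HasDerivAt (fun t : ℝ => (S k + γ k j * (t - θ j) : ℝ)) (γ k j) (θ j) := by
        have := ((hasDerivAt_id (θ j)).sub_const (θ j)).const_mul (γ k j)
        simpa using this.const_add (S k)
      exact this.ofReal_comp
    have h2 := (h1.const_mul Complex.I).cexp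
    have h3 := h2.const_mul (β k)
    refine h3.congr_deriv ?_
    simp only [sub_self, mul_zero, add_zero]
    ring
  rw [hderiv.deriv]
  -- rewrite the RHS
  simp only [hC]
  simp only [psr_sum_add, psr_sum_sub]
  rw [← Finset.sum_sub_distrib, ← Finset.sum_sub_distrib, Finset.mul_sum,
    ← Finset.sum_sub_distrib]
  refine Finset.sum_congr rfl fun k _ => ?_
  have key := psr_coef_key (γ k j) (hγ k j)
  have hexp : ∀ x y : ℝ, Complex.exp (Complex.I * ((x + y : ℝ) : ℂ)) =
      Complex.exp (Complex.I * (x : ℝ)) * Complex.exp (Complex.I * ((y : ℝ) : ℂ)) := by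
    intro x y
    rw [← Complex.exp_add]
    push_cast
    ring_nf
  have e1 := hexp (S k) (γ k j * (π/4))
  have e2 := hexp (S k) (-(γ k j * (π/4)))
  have e3 := hexp (S k) (γ k j * (π/2))
  have e4 := hexp (S k) (-(γ k j * (π/2)))
  have hsub1 : (S k - γ k j * (π/4) : ℝ) = S k + -(γ k j * (π/4)) := by ring
  have hsub2 : (S k - γ k j * (π/2) : ℝ) = S k + -(γ k j * (π/2)) := by ring
  rw [hsub1, hsub2, e1, e2, e3, e4]
  have := congrArg (fun z => β k * Complex.exp (Complex.I * ((S k : ℝ) : ℂ)) * z) key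
  rw [show β k * Complex.exp (Complex.I * ((S k : ℝ) : ℂ)) * (Complex.I * (γ k j)) =
      β k * Complex.exp (Complex.I * ((S k : ℝ) : ℂ)) * (Complex.I * (γ k j : ℂ)) from rfl]
  rw [this]
  ring
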